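/- In the pushout construction: with notation as above, let G̲ be the quotient of T * G by the left action of S given by s·(t, γ) = (t·φ(s⁻¹), sγ). Then G̲ is a groupoid with multiplication [t,γ][t',γ'] = [t·(π(γ)·t'), γγ'], the map π̲ : G̲ → H, [t,γ] ↦ π(γ) is a surjective groupoid homomorphism which is the identity on units, and its kernel is isomorphic to T via t ↦ [t, p_T(t)]. -/
import Mathlib


/-- An (algebraic) groupoid with unit space `X` and arrow space `A`.
The multiplication is total, but the axioms only constrain it on
composable pairs, i.e. pairs `(a, b)` with `src a = rng b`
(so `mul a b` corresponds to the product `a b` in the paper,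
with `s (a b) = s b` and `r (a b) = r a`). -/
structure Gpd (X : Type*) (A : Type*) where
  src : A → X
  rng : A → X
  mul : A → A → A
  inv : A → A
  unit : X → A
  src_unit : ∀ x, src (unit x) = x
  rng_unit : ∀ x, rng (unit x) = x
  src_mul : ∀ a b, src a = rng b → src (mul a b) = src b
  rng_mul : ∀ a b, src a = rng b → rng (mul a b) = rng a
  mul_assoc : ∀ a b c, src a = rng b → src b = rng c →
    mul (mul a b) c = mul a (mul b c)
  unit_mul : ∀ a, mul (unit (rng a)) a = a
  mul_unit : ∀ a, mul a (unit (src a)) = a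
  src_inv : ∀ a, src (inv a) = rng a
  rng_inv : ∀ a, rng (inv a) = src a
  mul_inv : ∀ a, mul a (inv a) = unit (rng a)
  inv_mul : ∀ a, mul (inv a) a = unit (src a)

/-- A bundle of abelian groups over `X`, with total space `T` and bundle map
`p`.  The (total) operations are only constrained fibrewise. -/
structure GrpBundle (X : Type*) (T : Type*) where
  p : T → X
  mul : T → T → T
  one : X → T
  inv : T → T
  p_one : ∀ x, p (one x) = x
  p_mul : ∀ s t, p s = p t → p (mul s t) = p s
  p_inv : ∀ t, p (inv t) = p t
  mul_assoc : ∀ s t u, p s = p t → p t = p u →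
    mul (mul s t) u = mul s (mul t u)
  mul_comm : ∀ s t, p s = p t → mul s t = mul t s
  one_mul : ∀ t, mul (one (p t)) t = t
  mul_inv : ∀ t, mul t (inv t) = one (p t)

/-- An action of the groupoid `H` on the group bundle `Tb` by group bundle
automorphisms covering the action of `H` on its units: an arrow `b` maps the
fibre over `src b` to the fibre over `rng b`. -/
structure GpdAction {X B T : Type*} (H : Gpd X B) (Tb : GrpBundle X T) where
  act : B → T → T
  p_act : ∀ b t, Tb.p t = H.src b → Tb.p (act b t) = H.rng b
  act_unit : ∀ t, act (H.unit (Tb.p t)) t = t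
  act_comp : ∀ b b' t, H.src b = H.rng b' → Tb.p t = H.src b' →
    act (H.mul b b') t = act b (act b' t)
  act_mul : ∀ b s t, Tb.p s = Tb.p t → Tb.p s = H.src b →
    act b (Tb.mul s t) = Tb.mul (act b s) (act b t)
  act_one : ∀ b, act b (Tb.one (H.src b)) = Tb.one (H.rng b)

namespace Gpd
variable {X A : Type*} (Γ : Gpd X A)

theorem eq_inv_of_mul {a b : A} (h : Γ.src a = Γ.rng b)
    (hm : Γ.mul a b = Γ.unit (Γ.rng a)) : b = Γ.inv a := by
  calc b = Γ.mul (Γ.unit (Γ.rng b)) b := (Γ.unit_mul b).symm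
    _ = Γ.mul (Γ.mul (Γ.inv a) a) b := by rw [← h, ← Γ.inv_mul a]
    _ = Γ.mul (Γ.inv a) (Γ.mul a b) := Γ.mul_assoc _ _ _ (Γ.src_inv a) h
    _ = Γ.mul (Γ.inv a) (Γ.unit (Γ.rng a)) := by rw [hm]
    _ = Γ.mul (Γ.inv a) (Γ.unit (Γ.src (Γ.inv a))) := by rw [Γ.src_inv]
    _ = Γ.inv a := Γ.mul_unit _

theorem inv_inv (a : A) : Γ.inv (Γ.inv a) = a :=
  (Γ.eq_inv_of_mul (Γ.src_inv a) (by rw [Γ.inv_mul, Γ.rng_inv])).symm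

theorem inv_unit (x : X) : Γ.inv (Γ.unit x) = Γ.unit x := by
  refine (Γ.eq_inv_of_mul (by rw [Γ.src_unit, Γ.rng_unit]) ?_).symm
  have h := Γ.mul_unit (Γ.unit x)
  rw [Γ.src_unit] at h
  rw [h, Γ.rng_unit]

theorem inv_mul_rev {a b : A} (h : Γ.src a = Γ.rng b) :
    Γ.inv (Γ.mul a b) = Γ.mul (Γ.inv b) (Γ.inv a) := by
  refine (Γ.eq_inv_of_mul ?_ ?_).symm
  · have hc : Γ.src (Γ.inv b) = Γ.rng (Γ.inv a) := by rw [Γ.src_inv, Γ.rng_inv, h]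
    rw [Γ.src_mul a b h, Γ.rng_mul _ _ hc, Γ.rng_inv]
  · calc Γ.mul (Γ.mul a b) (Γ.mul (Γ.inv b) (Γ.inv a))
        = Γ.mul a (Γ.mul b (Γ.mul (Γ.inv b) (Γ.inv a))) := by
          refine Γ.mul_assoc _ _ _ h ?_
          have hc : Γ.src (Γ.inv b) = Γ.rng (Γ.inv a) := by rw [Γ.src_inv, Γ.rng_inv, h]
          rw [Γ.rng_mul _ _ hc, Γ.rng_inv]
      _ = Γ.mul a (Γ.mul (Γ.mul b (Γ.inv b)) (Γ.inv a)) := by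
          rw [Γ.mul_assoc b (Γ.inv b) (Γ.inv a) (Γ.rng_inv b).symm
            (by rw [Γ.src_inv, Γ.rng_inv, h])]
      _ = Γ.mul a (Γ.mul (Γ.unit (Γ.rng b)) (Γ.inv a)) := by rw [Γ.mul_inv]
      _ = Γ.mul a (Γ.inv a) := by rw [← h, ← Γ.rng_inv a, Γ.unit_mul]
      _ = Γ.unit (Γ.rng a) := Γ.mul_inv a
      _ = Γ.unit (Γ.rng (Γ.mul a b)) := by rw [Γ.rng_mul a b h]

end Gpd

namespace GrpBundle
variable {X T : Type*} (Tb : GrpBundle X T)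

theorem mul_one (t : T) : Tb.mul t (Tb.one (Tb.p t)) = t := by
  rw [Tb.mul_comm _ _ (Tb.p_one _).symm, Tb.one_mul]

theorem eq_inv_of_mul {s t : T} (h : Tb.p s = Tb.p t)
    (hm : Tb.mul s t = Tb.one (Tb.p s)) : t = Tb.inv s := by
  calc t = Tb.mul (Tb.one (Tb.p t)) t := (Tb.one_mul t).symm
    _ = Tb.mul (Tb.mul (Tb.inv s) s) t := by
        rw [← h, ← Tb.mul_inv s, Tb.mul_comm s (Tb.inv s) (Tb.p_inv s).symm]
    _ = Tb.mul (Tb.inv s) (Tb.mul s t) := Tb.mul_assoc _ _ _ (Tb.p_inv s) h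
    _ = Tb.mul (Tb.inv s) (Tb.one (Tb.p (Tb.inv s))) := by rw [hm, Tb.p_inv]
    _ = Tb.inv s := Tb.mul_one _

theorem inv_mul (t : T) : Tb.mul (Tb.inv t) t = Tb.one (Tb.p t) := by
  rw [Tb.mul_comm _ _ (Tb.p_inv t), Tb.mul_inv]

theorem inv_inv (t : T) : Tb.inv (Tb.inv t) = t :=
  (Tb.eq_inv_of_mul (Tb.p_inv t) (by rw [Tb.inv_mul, Tb.p_inv])).symm

theorem inv_mul_rev {s t : T} (h : Tb.p s = Tb.p t) :
    Tb.inv (Tb.mul s t) = Tb.mul (Tb.inv s) (Tb.inv t) := by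
  have hps : Tb.p (Tb.inv s) = Tb.p s := Tb.p_inv s
  have hpt : Tb.p (Tb.inv t) = Tb.p t := Tb.p_inv t
  refine (Tb.eq_inv_of_mul ?_ ?_).symm
  · rw [Tb.p_mul _ _ h, Tb.p_mul _ _ (by rw [hps, hpt, h]), hps]
  · calc Tb.mul (Tb.mul s t) (Tb.mul (Tb.inv s) (Tb.inv t))
        = Tb.mul s (Tb.mul t (Tb.mul (Tb.inv s) (Tb.inv t))) :=
          Tb.mul_assoc _ _ _ h (by rw [Tb.p_mul _ _ (by rw [hps, hpt, h]), hps, h])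
      _ = Tb.mul s (Tb.mul (Tb.mul t (Tb.inv s)) (Tb.inv t)) := by
          rw [Tb.mul_assoc t (Tb.inv s) (Tb.inv t) (by rw [hps, h]) (by rw [hps, hpt, h])]
      _ = Tb.mul s (Tb.mul (Tb.mul (Tb.inv s) t) (Tb.inv t)) := by
          rw [Tb.mul_comm t (Tb.inv s) (by rw [hps, h])]
      _ = Tb.mul s (Tb.mul (Tb.inv s) (Tb.mul t (Tb.inv t))) := by
          rw [Tb.mul_assoc (Tb.inv s) t (Tb.inv t) (by rw [hps, h]) hpt.symm]
      _ = Tb.mul s (Tb.mul (Tb.inv s) (Tb.one (Tb.p t))) := by rw [Tb.mul_inv]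
      _ = Tb.mul s (Tb.mul (Tb.inv s) (Tb.one (Tb.p (Tb.inv s)))) := by rw [hps, h]
      _ = Tb.mul s (Tb.inv s) := by rw [Tb.mul_one]
      _ = Tb.one (Tb.p s) := Tb.mul_inv s
      _ = Tb.one (Tb.p (Tb.mul s t)) := by rw [Tb.p_mul _ _ h]

theorem mul_right_comm {x y z : T} (h1 : Tb.p x = Tb.p y) (h2 : Tb.p y = Tb.p z) :
    Tb.mul (Tb.mul x y) z = Tb.mul (Tb.mul x z) y := by
  rw [Tb.mul_assoc _ _ _ h1 h2, Tb.mul_comm y z h2, ← Tb.mul_assoc _ _ _ (h1.trans h2) h2.symm]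

end GrpBundle

namespace GpdAction
variable {X B T : Type*} {H : Gpd X B} {Tb : GrpBundle X T} (ac : GpdAction H Tb)

theorem act_inv {b : B} {t : T} (h : Tb.p t = H.src b) :
    ac.act b (Tb.inv t) = Tb.inv (ac.act b t) := by
  refine Tb.eq_inv_of_mul ?_ ?_
  · rw [ac.p_act _ _ h, ac.p_act _ _ (by rw [Tb.p_inv, h])]
  · rw [← ac.act_mul _ _ _ (Tb.p_inv t).symm h, Tb.mul_inv, h, ac.act_one,
      ac.p_act _ _ h]

end GpdAction

/-- Bundled data for the pushout construction. -/
structure POS (X A B T : Type*) where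
  G : Gpd X A
  H : Gpd X B
  Tb : GrpBundle X T
  ac : GpdAction H Tb
  π : A → B
  S : Set A
  φ : A → T
  hsrc : ∀ a, H.src (π a) = G.src a
  hrng : ∀ a, H.rng (π a) = G.rng a
  hmulπ : ∀ a b, G.src a = G.rng b → π (G.mul a b) = H.mul (π a) (π b)
  hunitπ : ∀ x, π (G.unit x) = H.unit x
  hker : ∀ a, a ∈ S ↔ π a = H.unit (G.src a)
  hiso : ∀ a ∈ S, G.src a = G.rng a
  hφp : ∀ a ∈ S, Tb.p (φ a) = G.src a
  hφmul : ∀ a b, a ∈ S → b ∈ S → G.src a = G.src b →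
    φ (G.mul a b) = Tb.mul (φ a) (φ b)
  hφunit : ∀ x, φ (G.unit x) = Tb.one x
  hφequiv : ∀ γ s, s ∈ S → G.rng s = G.src γ →
    φ (G.mul (G.mul γ s) (G.inv γ)) = ac.act (π γ) (φ s)
  hsurj : Function.Surjective π

namespace POS
variable {X A B T : Type*} (E : POS X A B T)

theorem pi_inv (a : A) : E.π (E.G.inv a) = E.H.inv (E.π a) := by
  refine E.H.eq_inv_of_mul ?_ ?_
  · rw [E.hsrc, E.hrng, E.G.rng_inv]
  · rw [← E.hmulπ a (E.G.inv a) (E.G.rng_inv a).symm, E.G.mul_inv, E.hunitπ, E.hrng]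

theorem mem_S {a : A} (h : a ∈ E.S) : E.π a = E.H.unit (E.G.src a) := (E.hker a).mp h

theorem unit_mem_S (x : X) : E.G.unit x ∈ E.S := by
  rw [E.hker, E.hunitπ, E.G.src_unit]

theorem inv_mem_S {a : A} (h : a ∈ E.S) : E.G.inv a ∈ E.S := by
  rw [E.hker, E.pi_inv, E.mem_S h, E.H.inv_unit, E.G.src_inv, E.hiso a h]

theorem mul_mem_S {a b : A} (ha : a ∈ E.S) (hb : b ∈ E.S)
    (hab : E.G.src a = E.G.rng b) : E.G.mul a b ∈ E.S := by
  rw [E.hker, E.hmulπ a b hab, E.mem_S ha, E.mem_S hb, E.G.src_mul a b hab, hab,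
    E.hiso b hb]
  have h := E.H.mul_unit (E.H.unit (E.G.rng b))
  rw [E.H.src_unit] at h
  exact h

theorem phi_p {a : A} (h : a ∈ E.S) : E.Tb.p (E.φ a) = E.G.src a := E.hφp a h

theorem phi_inv {a : A} (h : a ∈ E.S) : E.φ (E.G.inv a) = E.Tb.inv (E.φ a) := by
  refine E.Tb.eq_inv_of_mul ?_ ?_
  · rw [E.phi_p h, E.phi_p (E.inv_mem_S h), E.G.src_inv, E.hiso a h]
  · rw [← E.hφmul a (E.G.inv a) h (E.inv_mem_S h)
      (by rw [E.G.src_inv, E.hiso a h]), E.G.mul_inv, E.hφunit, E.phi_p h,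
      E.hiso a h]

theorem conj_mem_S {γ s : A} (hs : s ∈ E.S) (h : E.G.rng s = E.G.src γ) :
    E.G.mul (E.G.mul γ s) (E.G.inv γ) ∈ E.S := by
  have hsg : E.G.src γ = E.G.rng s := h.symm
  have h1 : E.G.src (E.G.mul γ s) = E.G.rng (E.G.inv γ) := by
    rw [E.G.src_mul γ s hsg, E.G.rng_inv, ← h, E.hiso s hs]
  rw [E.hker, E.hmulπ _ _ h1, E.hmulπ γ s hsg, E.pi_inv, E.mem_S hs,
    E.G.src_mul _ _ h1, E.G.src_inv]
  have h2 : E.H.unit (E.G.src s) = E.H.unit (E.H.src (E.π γ)) := by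
    rw [E.hsrc, ← h, E.hiso s hs]
  rw [h2, E.H.mul_unit, E.H.mul_inv, E.hrng]

theorem pi_S_mul {s γ : A} (hs : s ∈ E.S) (h : E.G.src s = E.G.rng γ) :
    E.π (E.G.mul s γ) = E.π γ := by
  rw [E.hmulπ s γ h, E.mem_S hs, h, ← E.hrng, E.H.unit_mul]

end POS

namespace POS
variable {X A B T : Type*} (E : POS X A B T)

abbrev Pre := {q : T × A // E.Tb.p q.1 = E.G.rng q.2}

abbrev rel (q q' : E.Pre) : Prop :=
  ∃ s ∈ E.S, E.G.src s = E.G.rng q.val.2 ∧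
    q'.val = (E.Tb.mul q.val.1 (E.φ (E.G.inv s)), E.G.mul s q.val.2)

theorem p_phi_inv_S {s : A} (hs : s ∈ E.S) :
    E.Tb.p (E.φ (E.G.inv s)) = E.G.rng s := by
  rw [E.phi_p (E.inv_mem_S hs), E.G.src_inv]

theorem rel_refl (q : E.Pre) : E.rel q q := by
  refine ⟨E.G.unit (E.G.rng q.val.2), E.unit_mem_S _, E.G.src_unit _, ?_⟩
  have c1 : E.Tb.mul q.val.1 (E.φ (E.G.inv (E.G.unit (E.G.rng q.val.2)))) =
      q.val.1 := by
    rw [E.G.inv_unit, E.hφunit, ← q.prop, E.Tb.mul_one]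
  rw [c1, E.G.unit_mul]

theorem rel_symm {q q' : E.Pre} (h : E.rel q q') : E.rel q' q := by
  obtain ⟨s, hs, hss, heq⟩ := h
  have h1 : q'.val.1 = E.Tb.mul q.val.1 (E.φ (E.G.inv s)) := by rw [heq]
  have h2 : q'.val.2 = E.G.mul s q.val.2 := by rw [heq]
  refine ⟨E.G.inv s, E.inv_mem_S hs, ?_, ?_⟩
  · rw [E.G.src_inv, h2, E.G.rng_mul s _ hss]
  · have hps : E.Tb.p (E.φ s) = E.G.rng q.val.2 := by rw [E.phi_p hs, hss]
    have c1 : E.Tb.mul q'.val.1 (E.φ (E.G.inv (E.G.inv s))) = q.val.1 := by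
      rw [E.G.inv_inv, h1, E.phi_inv hs,
        E.Tb.mul_assoc _ _ _ (by rw [q.prop, E.Tb.p_inv, hps]) (E.Tb.p_inv _),
        E.Tb.inv_mul, hps, ← q.prop, E.Tb.mul_one]
    have c2 : E.G.mul (E.G.inv s) q'.val.2 = q.val.2 := by
      rw [h2, ← E.G.mul_assoc _ _ _ (E.G.src_inv s) hss, E.G.inv_mul, hss,
        E.G.unit_mul]
    rw [c1, c2]

theorem rel_trans {q q' q'' : E.Pre} (h : E.rel q q') (h' : E.rel q' q'') :
    E.rel q q'' := by
  obtain ⟨s1, hs1, hss1, heq1⟩ := h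
  obtain ⟨s2, hs2, hss2, heq2⟩ := h'
  have h11 : q'.val.1 = E.Tb.mul q.val.1 (E.φ (E.G.inv s1)) := by rw [heq1]
  have h12 : q'.val.2 = E.G.mul s1 q.val.2 := by rw [heq1]
  have h21 : q''.val.1 = E.Tb.mul q'.val.1 (E.φ (E.G.inv s2)) := by rw [heq2]
  have h22 : q''.val.2 = E.G.mul s2 q'.val.2 := by rw [heq2]
  have hrs1 : E.G.rng s1 = E.G.rng q.val.2 := by rw [← E.hiso s1 hs1, hss1]
  have hc : E.G.src s2 = E.G.rng s1 := by
    rw [hss2, h12, E.G.rng_mul s1 _ hss1]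
  refine ⟨E.G.mul s2 s1, E.mul_mem_S hs2 hs1 hc, ?_, ?_⟩
  · rw [E.G.src_mul s2 s1 hc, hss1]
  · have c2 : q''.val.2 = E.G.mul (E.G.mul s2 s1) q.val.2 := by
      rw [h22, h12, E.G.mul_assoc s2 s1 _ hc hss1]
    have hp1 : E.Tb.p (E.φ (E.G.inv s1)) = E.G.rng q.val.2 := by
      rw [E.p_phi_inv_S hs1, hrs1]
    have hp2 : E.Tb.p (E.φ (E.G.inv s2)) = E.G.rng q.val.2 := by
      rw [E.p_phi_inv_S hs2, ← E.hiso s2 hs2, hc, hrs1]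
    have c1 : q''.val.1 =
        E.Tb.mul q.val.1 (E.φ (E.G.inv (E.G.mul s2 s1))) := by
      rw [h21, h11, E.G.inv_mul_rev hc,
        E.hφmul (E.G.inv s1) (E.G.inv s2) (E.inv_mem_S hs1) (E.inv_mem_S hs2)
          (by rw [E.G.src_inv, E.G.src_inv, ← E.hiso s2 hs2, hc]),
        E.Tb.mul_assoc _ _ _ (by rw [q.prop, hp1]) (by rw [hp1, hp2])]
    rw [Prod.ext_iff]
    exact ⟨c1, c2⟩

theorem rel_equiv : Equivalence E.rel :=
  ⟨E.rel_refl, E.rel_symm, E.rel_trans⟩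

theorem mk_eq_mk {q q' : E.Pre} :
    Quot.mk E.rel q = Quot.mk E.rel q' ↔ E.rel q q' :=
  Quot.eq.trans E.rel_equiv.eqvGen_iff

open Classical in
noncomputable def mulRep (q q' : E.Pre) : E.Pre :=
  if h : E.G.src q.val.2 = E.G.rng q'.val.2 then
    ⟨(E.Tb.mul q.val.1 (E.ac.act (E.π q.val.2) q'.val.1),
      E.G.mul q.val.2 q'.val.2), by
      have h1 : E.Tb.p q'.val.1 = E.H.src (E.π q.val.2) := by
        rw [E.hsrc, h]; exact q'.prop
      have h2 : E.Tb.p (E.ac.act (E.π q.val.2) q'.val.1) = E.Tb.p q.val.1 := by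
        rw [E.ac.p_act _ _ h1, E.hrng]; exact q.prop.symm
      rw [E.Tb.p_mul _ _ h2.symm, q.prop, E.G.rng_mul _ _ h]⟩
  else q

theorem mulRep_val {q q' : E.Pre} (h : E.G.src q.val.2 = E.G.rng q'.val.2) :
    (E.mulRep q q').val =
      (E.Tb.mul q.val.1 (E.ac.act (E.π q.val.2) q'.val.1),
        E.G.mul q.val.2 q'.val.2) := by
  unfold mulRep
  rw [dif_pos h]

theorem mulRep_val_neg {q q' : E.Pre} (h : ¬ E.G.src q.val.2 = E.G.rng q'.val.2) :
    E.mulRep q q' = q := by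
  unfold mulRep
  rw [dif_neg h]

def invRep (q : E.Pre) : E.Pre :=
  ⟨(E.ac.act (E.H.inv (E.π q.val.2)) (E.Tb.inv q.val.1), E.G.inv q.val.2), by
    have h1 : E.Tb.p (E.Tb.inv q.val.1) = E.H.src (E.H.inv (E.π q.val.2)) := by
      rw [E.Tb.p_inv, q.prop, E.H.src_inv, E.hrng]
    rw [E.ac.p_act _ _ h1, E.H.rng_inv, E.hsrc, E.G.rng_inv]⟩


theorem mulRep_rel_left {q1 q1' q2 : E.Pre} (h : E.rel q1 q1') :
    E.rel (E.mulRep q1 q2) (E.mulRep q1' q2) := by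
  obtain ⟨s, hs, hss, heq⟩ := h
  have h1 : q1'.val.1 = E.Tb.mul q1.val.1 (E.φ (E.G.inv s)) := by rw [heq]
  have h2 : q1'.val.2 = E.G.mul s q1.val.2 := by rw [heq]
  have hsq : E.G.src q1'.val.2 = E.G.src q1.val.2 := by
    rw [h2, E.G.src_mul s _ hss]
  by_cases c : E.G.src q1.val.2 = E.G.rng q2.val.2
  · have c' : E.G.src q1'.val.2 = E.G.rng q2.val.2 := by rw [hsq]; exact c
    have hm := E.mulRep_val c
    have hm' := E.mulRep_val c'
    refine ⟨s, hs, ?_, ?_⟩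
    · rw [hm, E.G.rng_mul _ _ c]
      exact hss
    · rw [hm, hm', Prod.ext_iff]
      constructor
      · show E.Tb.mul q1'.val.1 (E.ac.act (E.π q1'.val.2) q2.val.1) =
          E.Tb.mul (E.Tb.mul q1.val.1 (E.ac.act (E.π q1.val.2) q2.val.1))
            (E.φ (E.G.inv s))
        rw [h1, h2, E.pi_S_mul hs hss]
        refine E.Tb.mul_right_comm ?_ ?_
        · rw [q1.prop, E.p_phi_inv_S hs, ← E.hiso s hs, hss]
        · rw [E.p_phi_inv_S hs, ← E.hiso s hs, hss,
            E.ac.p_act _ _ (by rw [E.hsrc, c]; exact q2.prop), E.hrng]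
      · show E.G.mul q1'.val.2 q2.val.2 =
          E.G.mul s (E.G.mul q1.val.2 q2.val.2)
        rw [h2, E.G.mul_assoc s _ _ hss c]
  · have c' : ¬ E.G.src q1'.val.2 = E.G.rng q2.val.2 := by rw [hsq]; exact c
    rw [E.mulRep_val_neg c, E.mulRep_val_neg c']
    exact ⟨s, hs, hss, heq⟩

theorem mulRep_rel_right {q1 q2 q2' : E.Pre} (h : E.rel q2 q2') :
    E.rel (E.mulRep q1 q2) (E.mulRep q1 q2') := by
  obtain ⟨s, hs, hss, heq⟩ := h
  have h1 : q2'.val.1 = E.Tb.mul q2.val.1 (E.φ (E.G.inv s)) := by rw [heq]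
  have h2 : q2'.val.2 = E.G.mul s q2.val.2 := by rw [heq]
  have ceq : E.G.rng q2'.val.2 = E.G.rng q2.val.2 := by
    rw [h2, E.G.rng_mul s _ hss, ← E.hiso s hs, hss]
  by_cases c : E.G.src q1.val.2 = E.G.rng q2.val.2
  · have hrs : E.G.rng s = E.G.src q1.val.2 := by
      rw [← E.hiso s hs, hss]; exact c.symm
    have c' : E.G.src q1.val.2 = E.G.rng q2'.val.2 := by rw [ceq]; exact c
    have hm := E.mulRep_val c
    have hm' := E.mulRep_val c'
    have hs' : E.G.mul (E.G.mul q1.val.2 s) (E.G.inv q1.val.2) ∈ E.S :=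
      E.conj_mem_S hs hrs
    have e1 : E.G.src (E.G.mul q1.val.2 s) = E.G.rng (E.G.inv q1.val.2) := by
      rw [E.G.src_mul _ _ hrs.symm, E.G.rng_inv, hss]; exact c.symm
    have hphi : E.φ (E.G.inv (E.G.mul (E.G.mul q1.val.2 s) (E.G.inv q1.val.2)))
        = E.ac.act (E.π q1.val.2) (E.φ (E.G.inv s)) := by
      have hps : E.Tb.p (E.φ s) = E.H.src (E.π q1.val.2) := by
        rw [E.phi_p hs, hss, ← c, E.hsrc]
      rw [E.phi_inv hs', E.hφequiv q1.val.2 s hs hrs, E.phi_inv hs,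
        E.ac.act_inv hps]
    refine ⟨E.G.mul (E.G.mul q1.val.2 s) (E.G.inv q1.val.2), hs', ?_, ?_⟩
    · rw [hm, E.G.rng_mul _ _ c, E.G.src_mul _ _ e1, E.G.src_inv]
    · rw [hm, hm', Prod.ext_iff]
      constructor
      · show E.Tb.mul q1.val.1 (E.ac.act (E.π q1.val.2) q2'.val.1) =
          E.Tb.mul (E.Tb.mul q1.val.1 (E.ac.act (E.π q1.val.2) q2.val.1))
            (E.φ (E.G.inv (E.G.mul (E.G.mul q1.val.2 s) (E.G.inv q1.val.2))))
        rw [h1, hphi]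
        have hpa : E.Tb.p q2.val.1 = E.Tb.p (E.φ (E.G.inv s)) := by
          rw [q2.prop, E.p_phi_inv_S hs, ← E.hiso s hs, hss]
        have hpb : E.Tb.p q2.val.1 = E.H.src (E.π q1.val.2) := by
          rw [q2.prop, ← c, E.hsrc]
        rw [E.ac.act_mul _ _ _ hpa hpb]
        have ha : E.Tb.p q1.val.1 = E.Tb.p (E.ac.act (E.π q1.val.2) q2.val.1) := by
          rw [q1.prop, E.ac.p_act _ _ hpb, E.hrng]
        have hb : E.Tb.p (E.ac.act (E.π q1.val.2) q2.val.1)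
            = E.Tb.p (E.ac.act (E.π q1.val.2) (E.φ (E.G.inv s))) := by
          rw [E.ac.p_act _ _ hpb, E.ac.p_act _ _ (by rw [← hpa]; exact hpb)]
        rw [← E.Tb.mul_assoc _ _ _ ha hb]
      · show E.G.mul q1.val.2 q2'.val.2 =
          E.G.mul (E.G.mul (E.G.mul q1.val.2 s) (E.G.inv q1.val.2))
            (E.G.mul q1.val.2 q2.val.2)
        rw [h2]
        have r1 : E.G.mul (E.G.mul (E.G.mul q1.val.2 s) (E.G.inv q1.val.2))
              (E.G.mul q1.val.2 q2.val.2)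
            = E.G.mul (E.G.mul q1.val.2 s)
              (E.G.mul (E.G.inv q1.val.2) (E.G.mul q1.val.2 q2.val.2)) :=
          E.G.mul_assoc _ _ _ e1 (by rw [E.G.src_inv, E.G.rng_mul _ _ c])
        have r2 : E.G.mul (E.G.inv q1.val.2) (E.G.mul q1.val.2 q2.val.2)
            = q2.val.2 := by
          rw [← E.G.mul_assoc _ _ _ (E.G.src_inv _) c, E.G.inv_mul, c,
            E.G.unit_mul]
        rw [r1, r2, E.G.mul_assoc _ _ _ hrs.symm hss]
  · have c' : ¬ E.G.src q1.val.2 = E.G.rng q2'.val.2 := by rw [ceq]; exact c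
    rw [E.mulRep_val_neg c, E.mulRep_val_neg c']
    exact E.rel_refl q1

theorem invRep_rel {q q' : E.Pre} (h : E.rel q q') :
    E.rel (E.invRep q) (E.invRep q') := by
  obtain ⟨s, hs, hss, heq⟩ := h
  have h1 : q'.val.1 = E.Tb.mul q.val.1 (E.φ (E.G.inv s)) := by rw [heq]
  have h2 : q'.val.2 = E.G.mul s q.val.2 := by rw [heq]
  have hrs : E.G.rng (E.G.inv s) = E.G.src (E.G.inv q.val.2) := by
    rw [E.G.rng_inv, E.G.src_inv, hss]
  have hs'' : E.G.mul (E.G.mul (E.G.inv q.val.2) (E.G.inv s))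
      (E.G.inv (E.G.inv q.val.2)) ∈ E.S :=
    E.conj_mem_S (E.inv_mem_S hs) hrs
  have e1 : E.G.src (E.G.mul (E.G.inv q.val.2) (E.G.inv s))
      = E.G.rng (E.G.inv (E.G.inv q.val.2)) := by
    rw [E.G.src_mul _ _ hrs.symm, E.G.rng_inv, E.G.src_inv, E.G.src_inv,
      ← E.hiso s hs, hss]
  have hphi : E.φ (E.G.inv (E.G.mul (E.G.mul (E.G.inv q.val.2) (E.G.inv s))
        (E.G.inv (E.G.inv q.val.2))))
      = E.ac.act (E.H.inv (E.π q.val.2)) (E.φ s) := by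
    have hps : E.Tb.p (E.φ s) = E.H.src (E.H.inv (E.π q.val.2)) := by
      rw [E.phi_p hs, hss, E.H.src_inv, E.hrng]
    rw [E.phi_inv hs'', E.hφequiv _ _ (E.inv_mem_S hs) hrs, E.pi_inv,
      E.phi_inv hs, E.ac.act_inv hps, E.Tb.inv_inv]
  refine ⟨E.G.mul (E.G.mul (E.G.inv q.val.2) (E.G.inv s))
    (E.G.inv (E.G.inv q.val.2)), hs'', ?_, ?_⟩
  · show E.G.src _ = E.G.rng (E.G.inv q.val.2)
    rw [E.G.src_mul _ _ e1, E.G.src_inv]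
  · show (E.ac.act (E.H.inv (E.π q'.val.2)) (E.Tb.inv q'.val.1),
        E.G.inv q'.val.2)
      = (E.Tb.mul (E.ac.act (E.H.inv (E.π q.val.2)) (E.Tb.inv q.val.1))
          (E.φ (E.G.inv (E.G.mul (E.G.mul (E.G.inv q.val.2) (E.G.inv s))
            (E.G.inv (E.G.inv q.val.2))))),
        E.G.mul (E.G.mul (E.G.mul (E.G.inv q.val.2) (E.G.inv s))
          (E.G.inv (E.G.inv q.val.2))) (E.G.inv q.val.2))
    rw [Prod.ext_iff]
    constructor
    · show E.ac.act (E.H.inv (E.π q'.val.2)) (E.Tb.inv q'.val.1) = _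
      rw [h1, h2, E.pi_S_mul hs hss, hphi]
      have hpt : E.Tb.p q.val.1 = E.Tb.p (E.φ (E.G.inv s)) := by
        rw [q.prop, E.p_phi_inv_S hs, ← E.hiso s hs, hss]
      rw [E.Tb.inv_mul_rev hpt, E.phi_inv hs, E.Tb.inv_inv]
      have hp1 : E.Tb.p (E.Tb.inv q.val.1) = E.Tb.p (E.φ s) := by
        rw [E.Tb.p_inv, q.prop, E.phi_p hs, hss]
      have hp2 : E.Tb.p (E.Tb.inv q.val.1) = E.H.src (E.H.inv (E.π q.val.2)) := by
        rw [E.Tb.p_inv, q.prop, E.H.src_inv, E.hrng]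
      exact E.ac.act_mul _ _ _ hp1 hp2
    · show E.G.inv q'.val.2 = _
      rw [h2, E.G.inv_mul_rev hss]
      have r1 : E.G.mul (E.G.mul (E.G.mul (E.G.inv q.val.2) (E.G.inv s))
            (E.G.inv (E.G.inv q.val.2))) (E.G.inv q.val.2)
          = E.G.mul (E.G.mul (E.G.inv q.val.2) (E.G.inv s))
            (E.G.mul (E.G.inv (E.G.inv q.val.2)) (E.G.inv q.val.2)) :=
        E.G.mul_assoc _ _ _ e1 (E.G.src_inv _)
      have r2 : E.G.mul (E.G.inv (E.G.inv q.val.2)) (E.G.inv q.val.2)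
          = E.G.unit (E.G.rng q.val.2) := by
        rw [E.G.inv_inv, E.G.mul_inv]
      have e2 : E.G.src (E.G.mul (E.G.inv q.val.2) (E.G.inv s))
          = E.G.rng q.val.2 := by
        rw [E.G.src_mul _ _ hrs.symm, E.G.src_inv, ← E.hiso s hs, hss]
      have r3 : E.G.mul (E.G.mul (E.G.inv q.val.2) (E.G.inv s))
          (E.G.unit (E.G.rng q.val.2)) = E.G.mul (E.G.inv q.val.2) (E.G.inv s) := by
        rw [← e2, E.G.mul_unit]
      rw [r1, r2, r3]


def srcQ : Quot E.rel → X :=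
  Quot.lift (fun q => E.G.src q.val.2) (by
    rintro q q' ⟨s, hs, hss, heq⟩
    have h2 : q'.val.2 = E.G.mul s q.val.2 := by rw [heq]
    show E.G.src q.val.2 = E.G.src q'.val.2
    rw [h2, E.G.src_mul s _ hss])

def rngQ : Quot E.rel → X :=
  Quot.lift (fun q => E.G.rng q.val.2) (by
    rintro q q' ⟨s, hs, hss, heq⟩
    have h2 : q'.val.2 = E.G.mul s q.val.2 := by rw [heq]
    show E.G.rng q.val.2 = E.G.rng q'.val.2
    rw [h2, E.G.rng_mul s _ hss, ← E.hiso s hs, hss])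

noncomputable def unitRep (x : X) : E.Pre :=
  ⟨(E.Tb.one x, E.G.unit x), by rw [E.Tb.p_one, E.G.rng_unit]⟩

theorem unitRep_val (x : X) : (E.unitRep x).val = (E.Tb.one x, E.G.unit x) := rfl

noncomputable def unitQ (x : X) : Quot E.rel :=
  Quot.mk _ (E.unitRep x)

noncomputable def mulQ : Quot E.rel → Quot E.rel → Quot E.rel :=
  Quot.lift
    (fun q1 => Quot.lift (fun q2 => Quot.mk E.rel (E.mulRep q1 q2))
      (fun _ _ h => Quot.sound (E.mulRep_rel_right h)))
    (fun _ _ h => by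
      funext z
      induction z using Quot.ind
      exact Quot.sound (E.mulRep_rel_left h))

noncomputable def invQ : Quot E.rel → Quot E.rel :=
  Quot.lift (fun q => Quot.mk E.rel (E.invRep q))
    (fun _ _ h => Quot.sound (E.invRep_rel h))

theorem srcQ_mk (q : E.Pre) : E.srcQ (Quot.mk E.rel q) = E.G.src q.val.2 := rfl
theorem rngQ_mk (q : E.Pre) : E.rngQ (Quot.mk E.rel q) = E.G.rng q.val.2 := rfl
theorem mulQ_mk (q q' : E.Pre) :
    E.mulQ (Quot.mk E.rel q) (Quot.mk E.rel q') = Quot.mk E.rel (E.mulRep q q') :=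
  rfl
theorem invQ_mk (q : E.Pre) :
    E.invQ (Quot.mk E.rel q) = Quot.mk E.rel (E.invRep q) := rfl

theorem invRep_val (q : E.Pre) :
    (E.invRep q).val =
      (E.ac.act (E.H.inv (E.π q.val.2)) (E.Tb.inv q.val.1), E.G.inv q.val.2) :=
  rfl

noncomputable def Q : Gpd X (Quot E.rel) where
  src := E.srcQ
  rng := E.rngQ
  mul := E.mulQ
  inv := E.invQ
  unit := E.unitQ
  src_unit := fun x => by
    show E.G.src (E.G.unit x) = x
    exact E.G.src_unit x
  rng_unit := fun x => by
    show E.G.rng (E.G.unit x) = x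
    exact E.G.rng_unit x
  src_mul := by
    intro z w
    induction z using Quot.ind; rename_i q1
    induction w using Quot.ind; rename_i q2
    intro h
    rw [E.mulQ_mk, E.srcQ_mk, E.srcQ_mk, E.mulRep_val h, E.G.src_mul _ _ h]
  rng_mul := by
    intro z w
    induction z using Quot.ind; rename_i q1
    induction w using Quot.ind; rename_i q2
    intro h
    rw [E.mulQ_mk, E.rngQ_mk, E.rngQ_mk, E.mulRep_val h, E.G.rng_mul _ _ h]
  mul_assoc := by
    intro z w v
    induction z using Quot.ind; rename_i q1
    induction w using Quot.ind; rename_i q2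
    induction v using Quot.ind; rename_i q3
    intro h1 h2
    replace h1 : E.G.src q1.val.2 = E.G.rng q2.val.2 := h1
    replace h2 : E.G.src q2.val.2 = E.G.rng q3.val.2 := h2
    rw [E.mulQ_mk, E.mulQ_mk, E.mulQ_mk, E.mulQ_mk]
    have hm12 := E.mulRep_val h1
    have hm23 := E.mulRep_val h2
    have c12 : E.G.src (E.mulRep q1 q2).val.2 = E.G.rng q3.val.2 := by
      rw [hm12, E.G.src_mul _ _ h1]; exact h2
    have c23 : E.G.src q1.val.2 = E.G.rng (E.mulRep q2 q3).val.2 := by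
      rw [hm23, E.G.rng_mul _ _ h2]; exact h1
    congr 1
    refine Subtype.ext ?_
    rw [E.mulRep_val c12, E.mulRep_val c23, hm12, hm23, Prod.ext_iff]
    constructor
    · show E.Tb.mul (E.Tb.mul q1.val.1 (E.ac.act (E.π q1.val.2) q2.val.1))
          (E.ac.act (E.π (E.G.mul q1.val.2 q2.val.2)) q3.val.1)
        = E.Tb.mul q1.val.1 (E.ac.act (E.π q1.val.2)
            (E.Tb.mul q2.val.1 (E.ac.act (E.π q2.val.2) q3.val.1)))
      have hp3 : E.Tb.p q3.val.1 = E.H.src (E.π q2.val.2) := by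
        rw [q3.prop, ← h2, E.hsrc]
      have hp2 : E.Tb.p q2.val.1 = E.H.src (E.π q1.val.2) := by
        rw [q2.prop, ← h1, E.hsrc]
      have hpa : E.Tb.p q2.val.1 = E.Tb.p (E.ac.act (E.π q2.val.2) q3.val.1) := by
        rw [q2.prop, E.ac.p_act _ _ hp3, E.hrng]
      have hcomp : E.H.src (E.π q1.val.2) = E.H.rng (E.π q2.val.2) := by
        rw [E.hsrc, E.hrng]; exact h1
      have ha : E.Tb.p q1.val.1 = E.Tb.p (E.ac.act (E.π q1.val.2) q2.val.1) := by
        rw [q1.prop, E.ac.p_act _ _ hp2, E.hrng]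
      have hx : E.Tb.p (E.ac.act (E.π q2.val.2) q3.val.1)
          = E.H.src (E.π q1.val.2) := by
        rw [E.ac.p_act _ _ hp3, E.hrng, ← h1, E.hsrc]
      have hb : E.Tb.p (E.ac.act (E.π q1.val.2) q2.val.1)
          = E.Tb.p (E.ac.act (E.π q1.val.2)
              (E.ac.act (E.π q2.val.2) q3.val.1)) := by
        rw [E.ac.p_act _ _ hp2, E.ac.p_act _ _ hx]
      rw [E.hmulπ _ _ h1, E.ac.act_comp _ _ _ hcomp hp3,
        E.ac.act_mul _ _ _ hpa hp2]
      exact E.Tb.mul_assoc _ _ _ ha hb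
    · exact E.G.mul_assoc _ _ _ h1 h2
  unit_mul := by
    intro z
    induction z using Quot.ind; rename_i q
    show Quot.mk E.rel (E.mulRep (E.unitRep (E.G.rng q.val.2)) q) = Quot.mk E.rel q
    have c : E.G.src (E.unitRep (E.G.rng q.val.2)).val.2 = E.G.rng q.val.2 :=
      E.G.src_unit _
    refine congrArg _ (Subtype.ext ?_)
    rw [E.mulRep_val c]
    show (E.Tb.mul (E.Tb.one (E.G.rng q.val.2))
        (E.ac.act (E.π (E.G.unit (E.G.rng q.val.2))) q.val.1),
      E.G.mul (E.G.unit (E.G.rng q.val.2)) q.val.2) = q.val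
    have a1 : E.ac.act (E.H.unit (E.G.rng q.val.2)) q.val.1 = q.val.1 := by
      rw [← q.prop, E.ac.act_unit]
    have a2 : E.Tb.mul (E.Tb.one (E.G.rng q.val.2)) q.val.1 = q.val.1 := by
      rw [← q.prop, E.Tb.one_mul]
    rw [E.hunitπ, a1, a2, E.G.unit_mul]
  mul_unit := by
    intro z
    induction z using Quot.ind; rename_i q
    show Quot.mk E.rel (E.mulRep q (E.unitRep (E.G.src q.val.2))) = Quot.mk E.rel q
    have c : E.G.src q.val.2 = E.G.rng (E.unitRep (E.G.src q.val.2)).val.2 :=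
      (E.G.rng_unit _).symm
    refine congrArg _ (Subtype.ext ?_)
    rw [E.mulRep_val c]
    show (E.Tb.mul q.val.1 (E.ac.act (E.π q.val.2) (E.Tb.one (E.G.src q.val.2))),
      E.G.mul q.val.2 (E.G.unit (E.G.src q.val.2))) = q.val
    have a1 : E.ac.act (E.π q.val.2) (E.Tb.one (E.G.src q.val.2))
        = E.Tb.one (E.Tb.p q.val.1) := by
      rw [← E.hsrc, E.ac.act_one, E.hrng, q.prop]
    rw [a1, E.Tb.mul_one, E.G.mul_unit]
  src_inv := by
    intro z
    induction z using Quot.ind; rename_i q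
    show E.G.src (E.G.inv q.val.2) = E.G.rng q.val.2
    exact E.G.src_inv _
  rng_inv := by
    intro z
    induction z using Quot.ind; rename_i q
    show E.G.rng (E.G.inv q.val.2) = E.G.src q.val.2
    exact E.G.rng_inv _
  mul_inv := by
    intro z
    induction z using Quot.ind; rename_i q
    show Quot.mk E.rel (E.mulRep q (E.invRep q))
      = Quot.mk E.rel (E.unitRep (E.G.rng q.val.2))
    have c : E.G.src q.val.2 = E.G.rng (E.invRep q).val.2 :=
      (E.G.rng_inv _).symm
    refine congrArg _ (Subtype.ext ?_)
    rw [E.mulRep_val c]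
    show (E.Tb.mul q.val.1 (E.ac.act (E.π q.val.2)
        (E.ac.act (E.H.inv (E.π q.val.2)) (E.Tb.inv q.val.1))),
      E.G.mul q.val.2 (E.G.inv q.val.2))
      = (E.Tb.one (E.G.rng q.val.2), E.G.unit (E.G.rng q.val.2))
    have hpt : E.Tb.p (E.Tb.inv q.val.1) = E.H.src (E.H.inv (E.π q.val.2)) := by
      rw [E.Tb.p_inv, q.prop, E.H.src_inv, E.hrng]
    have hcomp : E.H.src (E.π q.val.2) = E.H.rng (E.H.inv (E.π q.val.2)) :=
      (E.H.rng_inv _).symm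
    have a1 : E.ac.act (E.π q.val.2)
        (E.ac.act (E.H.inv (E.π q.val.2)) (E.Tb.inv q.val.1))
        = E.Tb.inv q.val.1 := by
      rw [← E.ac.act_comp _ _ _ hcomp hpt, E.H.mul_inv, E.hrng, ← q.prop,
        ← E.Tb.p_inv q.val.1, E.ac.act_unit]
    rw [Prod.ext_iff]
    refine ⟨?_, E.G.mul_inv _⟩
    rw [a1, E.Tb.mul_inv, q.prop]
  inv_mul := by
    intro z
    induction z using Quot.ind; rename_i q
    show Quot.mk E.rel (E.mulRep (E.invRep q) q)
      = Quot.mk E.rel (E.unitRep (E.G.src q.val.2))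
    have c : E.G.src (E.invRep q).val.2 = E.G.rng q.val.2 := E.G.src_inv _
    refine congrArg _ (Subtype.ext ?_)
    rw [E.mulRep_val c]
    show (E.Tb.mul (E.ac.act (E.H.inv (E.π q.val.2)) (E.Tb.inv q.val.1))
        (E.ac.act (E.π (E.G.inv q.val.2)) q.val.1),
      E.G.mul (E.G.inv q.val.2) q.val.2)
      = (E.Tb.one (E.G.src q.val.2), E.G.unit (E.G.src q.val.2))
    rw [E.pi_inv]
    have hx : E.Tb.p (E.Tb.inv q.val.1) = E.Tb.p q.val.1 := E.Tb.p_inv _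
    have hsb : E.Tb.p (E.Tb.inv q.val.1) = E.H.src (E.H.inv (E.π q.val.2)) := by
      rw [E.Tb.p_inv, q.prop, E.H.src_inv, E.hrng]
    have a1 : E.Tb.mul (E.ac.act (E.H.inv (E.π q.val.2)) (E.Tb.inv q.val.1))
        (E.ac.act (E.H.inv (E.π q.val.2)) q.val.1)
        = E.Tb.one (E.G.src q.val.2) := by
      rw [← E.ac.act_mul _ _ _ hx hsb, E.Tb.inv_mul, q.prop, ← E.hrng,
        ← E.H.src_inv (E.π q.val.2), E.ac.act_one, E.H.rng_inv, E.hsrc]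
    rw [Prod.ext_iff]
    exact ⟨a1, E.G.inv_mul _⟩


def pbarQ : Quot E.rel → B :=
  Quot.lift (fun q => E.π q.val.2) (by
    rintro q q' ⟨s, hs, hss, heq⟩
    have h2 : q'.val.2 = E.G.mul s q.val.2 := by rw [heq]
    show E.π q.val.2 = E.π q'.val.2
    rw [h2, E.pi_S_mul hs hss])

theorem pbarQ_mk (q : E.Pre) : E.pbarQ (Quot.mk E.rel q) = E.π q.val.2 := rfl

theorem pbarQ_surj : Function.Surjective E.pbarQ := by
  intro b
  obtain ⟨γ, hγ⟩ := E.hsurj b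
  exact ⟨Quot.mk E.rel ⟨(E.Tb.one (E.G.rng γ), γ), by rw [E.Tb.p_one]⟩, hγ⟩

noncomputable def jRep (t : T) : E.Pre :=
  ⟨(t, E.G.unit (E.Tb.p t)), by rw [E.G.rng_unit]⟩

noncomputable def jQ (t : T) : Quot E.rel := Quot.mk E.rel (E.jRep t)

theorem jQ_inj : Function.Injective E.jQ := by
  intro t t' h
  obtain ⟨s, hs, hss, heq⟩ := E.mk_eq_mk.mp h
  have hss' : E.G.src s = E.Tb.p t := by
    rw [← E.G.rng_unit (E.Tb.p t)]; exact hss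
  have h1 : t' = E.Tb.mul t (E.φ (E.G.inv s)) := congrArg Prod.fst heq
  have h2 : E.G.unit (E.Tb.p t') = E.G.mul s (E.G.unit (E.Tb.p t)) :=
    congrArg Prod.snd heq
  have hes : E.G.unit (E.Tb.p t') = s := by
    rw [h2, ← hss', E.G.mul_unit]
  have e1 : E.G.src s = E.Tb.p t' := by rw [← hes, E.G.src_unit]
  have hptt : E.Tb.p t' = E.Tb.p t := by rw [← e1, hss']
  rw [h1, ← hes, E.G.inv_unit, E.hφunit, hptt, E.Tb.mul_one]

theorem ker_iff (z : Quot E.rel) :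
    E.pbarQ z = E.H.unit (E.srcQ z) ↔ ∃ t, z = E.jQ t := by
  induction z using Quot.ind; rename_i q
  constructor
  · intro hz
    replace hz : E.π q.val.2 = E.H.unit (E.G.src q.val.2) := hz
    have hγS : q.val.2 ∈ E.S := (E.hker _).mpr hz
    have hpφ : E.Tb.p q.val.1 = E.Tb.p (E.φ q.val.2) := by
      rw [q.prop, E.phi_p hγS, E.hiso _ hγS]
    refine ⟨E.Tb.mul q.val.1 (E.φ q.val.2),
      Quot.sound ⟨E.G.inv q.val.2, E.inv_mem_S hγS, E.G.src_inv _, ?_⟩⟩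
    show (E.Tb.mul q.val.1 (E.φ q.val.2),
        E.G.unit (E.Tb.p (E.Tb.mul q.val.1 (E.φ q.val.2))))
      = (E.Tb.mul q.val.1 (E.φ (E.G.inv (E.G.inv q.val.2))),
        E.G.mul (E.G.inv q.val.2) q.val.2)
    rw [E.G.inv_inv, E.G.inv_mul, E.Tb.p_mul _ _ hpφ, q.prop, ← E.hiso _ hγS]
  · rintro ⟨t, ht⟩
    rw [ht]
    show E.π (E.G.unit (E.Tb.p t)) = E.H.unit (E.G.src (E.G.unit (E.Tb.p t)))
    rw [E.hunitπ, E.G.src_unit]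

theorem jQ_mul {t t' : T} (hp : E.Tb.p t = E.Tb.p t') :
    E.jQ (E.Tb.mul t t') = E.mulQ (E.jQ t) (E.jQ t') := by
  have c : E.G.src (E.jRep t).val.2 = E.G.rng (E.jRep t').val.2 := by
    show E.G.src (E.G.unit (E.Tb.p t)) = E.G.rng (E.G.unit (E.Tb.p t'))
    rw [E.G.src_unit, E.G.rng_unit]; exact hp
  refine (congrArg _ (Subtype.ext ?_)).symm
  rw [E.mulRep_val c]
  show (E.Tb.mul t (E.ac.act (E.π (E.G.unit (E.Tb.p t))) t'),
      E.G.mul (E.G.unit (E.Tb.p t)) (E.G.unit (E.Tb.p t')))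
    = (E.Tb.mul t t', E.G.unit (E.Tb.p (E.Tb.mul t t')))
  have a1 : E.ac.act (E.π (E.G.unit (E.Tb.p t))) t' = t' := by
    rw [E.hunitπ, hp, E.ac.act_unit]
  have a2 : E.G.mul (E.G.unit (E.Tb.p t)) (E.G.unit (E.Tb.p t'))
      = E.G.unit (E.Tb.p (E.Tb.mul t t')) := by
    rw [E.Tb.p_mul _ _ hp, hp]
    have u := E.G.unit_mul (E.G.unit (E.Tb.p t'))
    rw [E.G.rng_unit] at u
    exact u
  rw [a1, a2]

end POS

/-- the quotient `G̲` of `T * G` by the left `S`-action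
`s·(t,γ) = (t·φ(s⁻¹), sγ)` is a groupoid with multiplication
`[t,γ][t',γ'] = [t·(π(γ)·t'), γγ']`; the map `π̲ : G̲ → H`, `[t,γ] ↦ π γ`,
is a surjective groupoid homomorphism which is the identity on units, and its
kernel is isomorphic to `T` via `t ↦ [t, p_T t]`. -/
theorem stmt3 {X A B T : Type*} (G : Gpd X A) (H : Gpd X B)
    (Tb : GrpBundle X T) (ac : GpdAction H Tb)
    (π : A → B)
    (hsrc : ∀ a, H.src (π a) = G.src a)
    (hrng : ∀ a, H.rng (π a) = G.rng a)
    (hmulπ : ∀ a b, G.src a = G.rng b → π (G.mul a b) = H.mul (π a) (π b))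
    (hunitπ : ∀ x, π (G.unit x) = H.unit x)
    (hsurj : Function.Surjective π)
    (S : Set A) (hker : S = {a | π a = H.unit (G.src a)})
    (hiso : ∀ a ∈ S, G.src a = G.rng a)
    (φ : A → T)
    (hφp : ∀ a ∈ S, Tb.p (φ a) = G.src a)
    (hφmul : ∀ a b, a ∈ S → b ∈ S → G.src a = G.src b →
      φ (G.mul a b) = Tb.mul (φ a) (φ b))
    (hφunit : ∀ x, φ (G.unit x) = Tb.one x)
    (hφequiv : ∀ γ s, s ∈ S → G.rng s = G.src γ →
      φ (G.mul (G.mul γ s) (G.inv γ)) = ac.act (π γ) (φ s))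
    (rrel : {q : T × A // Tb.p q.1 = G.rng q.2} →
      {q : T × A // Tb.p q.1 = G.rng q.2} → Prop)
    (hrrel : rrel = fun q q' => ∃ s ∈ S, G.src s = G.rng q.val.2 ∧
      q'.val = (Tb.mul q.val.1 (φ (G.inv s)), G.mul s q.val.2)) :
    ∃ (Q : Gpd X (Quot rrel)),
      (∀ q, Q.src (Quot.mk rrel q) = G.src q.val.2) ∧
      (∀ q, Q.rng (Quot.mk rrel q) = G.rng q.val.2) ∧
      (∀ x, ∃ u, u.val = (Tb.one x, G.unit x) ∧ Q.unit x = Quot.mk rrel u) ∧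
      (∀ q q', G.src q.val.2 = G.rng q'.val.2 →
        ∃ m, m.val = (Tb.mul q.val.1 (ac.act (π q.val.2) q'.val.1),
            G.mul q.val.2 q'.val.2) ∧
          Q.mul (Quot.mk rrel q) (Quot.mk rrel q') = Quot.mk rrel m) ∧
      ∃ pbar : Quot rrel → B,
        (∀ q, pbar (Quot.mk rrel q) = π q.val.2) ∧
        Function.Surjective pbar ∧
        (∀ z, H.src (pbar z) = Q.src z ∧ H.rng (pbar z) = Q.rng z) ∧
        (∀ z w, Q.src z = Q.rng w → pbar (Q.mul z w) = H.mul (pbar z) (pbar w)) ∧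
        (∀ x, pbar (Q.unit x) = H.unit x) ∧
        ∃ j : T → Quot rrel,
          (∀ t, ∃ u, u.val = (t, G.unit (Tb.p t)) ∧ j t = Quot.mk rrel u) ∧
          Function.Injective j ∧
          (∀ z, pbar z = H.unit (Q.src z) ↔ ∃ t, z = j t) ∧
          (∀ t t', Tb.p t = Tb.p t' →
            j (Tb.mul t t') = Q.mul (j t) (j t')) := by
  subst hrrel
  have hker' : ∀ a, a ∈ S ↔ π a = H.unit (G.src a) := by
    intro a; rw [hker]; exact Iff.rfl
  let E : POS X A B T := ⟨G, H, Tb, ac, π, S, φ, hsrc, hrng, hmulπ, hunitπ,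
    hker', hiso, hφp, hφmul, hφunit, hφequiv, hsurj⟩
  refine ⟨E.Q, fun q => rfl, fun q => rfl, fun x => ⟨E.unitRep x, rfl, rfl⟩,
    fun q q' h => ⟨E.mulRep q q', E.mulRep_val h, rfl⟩,
    E.pbarQ, fun q => rfl, E.pbarQ_surj, ?_, ?_, fun x => E.hunitπ x,
    E.jQ, fun t => ⟨E.jRep t, rfl, rfl⟩, E.jQ_inj, fun z => E.ker_iff z,
    fun t t' hp => E.jQ_mul hp⟩
  · intro z
    induction z using Quot.ind; rename_i q
    exact ⟨E.hsrc q.val.2, E.hrng q.val.2⟩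
  · intro z w
    induction z using Quot.ind; rename_i q
    induction w using Quot.ind; rename_i q'
    intro h
    replace h : E.G.src q.val.2 = E.G.rng q'.val.2 := h
    show E.π (E.mulRep q q').val.2 = E.H.mul (E.π q.val.2) (E.π q'.val.2)
    rw [congrArg Prod.snd (E.mulRep_val h)]
    exact E.hmulπ _ _ h
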